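/- (Theorem 2.3, second identity, q-case; q-factorial moments of the q-binomial distribution of the second kind, giving the conditional moments of X₂ given X₁ = x₁ upon taking N = n − x₁ and β = β₂.) Let N ∈ ℕ, β ∈ (0,1) and let m be a natural number with m ≤ N. Then ∑_{x=0}^{N} [x]_{m,q} · C_q(N,x) · β^{x} · ⟨1⊖β⟩_{N−x} = [N]_{m,q} · β^{m}. -/

import Mathlib

open Finset

/-- q-integer `[k]_q = (1 - q^k)/(1 - q)`. -/
noncomputable def qInt (q : ℝ) (k : ℤ) : ℝ := (1 - q ^ k) / (1 - q)

/-- q-factorial `[n]_q! = ∏_{i=1}^n [i]_q`. -/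
noncomputable def qFact (q : ℝ) (n : ℕ) : ℝ := ∏ i ∈ Finset.Icc 1 n, qInt q (i : ℤ)

/-- q-binomial coefficient `C_q(n,k)`. -/
noncomputable def qBinom (q : ℝ) (n k : ℕ) : ℝ := qFact q n / (qFact q k * qFact q (n - k))

/-- q-falling factorial `[u]_{m,q} = ∏_{i=1}^m [u-i+1]_q`. -/
noncomputable def qFall (q : ℝ) (u : ℤ) (m : ℕ) : ℝ := ∏ i ∈ Finset.Icc 1 m, qInt q (u - (i : ℤ) + 1)

/-- `[k]_{q⁻¹} = q^{1-k} · [k]_q`. -/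
noncomputable def qIntInv (q : ℝ) (k : ℤ) : ℝ := q ^ (1 - k) * qInt q k

/-- `[u]_{m,q⁻¹} = ∏_{i=1}^m [u-i+1]_{q⁻¹}`. -/
noncomputable def qFallInv (q : ℝ) (u : ℤ) (m : ℕ) : ℝ := ∏ i ∈ Finset.Icc 1 m, qIntInv q (u - (i : ℤ) + 1)

/-- `b(k) = k(k-1)/2`. -/
def bb (k : ℕ) : ℕ := k * (k - 1) / 2

/-- `⟨1 ⊕ α⟩_m = ∏_{i=1}^m (1 + α q^{i-1})`. -/
noncomputable def oplus (q α : ℝ) (m : ℕ) : ℝ := ∏ i ∈ Finset.Icc 1 m, (1 + α * q ^ (i - 1))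

/-- `⟨1 ⊖ β⟩_m = ∏_{i=1}^m (1 - β q^{i-1})`. -/
noncomputable def ominus (q β : ℝ) (m : ℕ) : ℝ := ∏ i ∈ Finset.Icc 1 m, (1 - β * q ^ (i - 1))

/-- q-trinomial coefficient `T_q(n; x₁, x₂)`. -/
noncomputable def qTri (q : ℝ) (n x1 x2 : ℕ) : ℝ :=
  qFact q n / (qFact q x1 * qFact q x2 * qFact q (n - x1 - x2))

lemma qInt_pos {q : ℝ} (hq0 : 0 < q) (hq1 : q < 1) {k : ℕ} (hk : 1 ≤ k) :
    0 < qInt q (k : ℤ) := by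
  unfold qInt
  rw [zpow_natCast]
  apply div_pos
  · have : q ^ k < 1 := pow_lt_one₀ hq0.le hq1 (by omega)
    linarith
  · linarith

lemma qFact_pos {q : ℝ} (hq0 : 0 < q) (hq1 : q < 1) (n : ℕ) : 0 < qFact q n := by
  unfold qFact
  exact Finset.prod_pos (fun i hi => qInt_pos hq0 hq1 (mem_Icc.mp hi).1)

lemma qFact_succ (q : ℝ) (n : ℕ) : qFact q (n + 1) = qFact q n * qInt q ((n : ℤ) + 1) := by
  unfold qFact
  rw [Finset.prod_Icc_succ_top (by omega : 1 ≤ n + 1)]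
  norm_cast

lemma ominus_succ (q t : ℝ) (n : ℕ) :
    ominus q t (n + 1) = ominus q t n * (1 - t * q ^ n) := by
  unfold ominus
  rw [Finset.prod_Icc_succ_top (by omega : 1 ≤ n + 1)]
  norm_num

lemma qFall_succ (q : ℝ) (u : ℤ) (m : ℕ) :
    qFall q u (m + 1) = qFall q u m * qInt q (u - m) := by
  unfold qFall
  rw [Finset.prod_Icc_succ_top (by omega : 1 ≤ m + 1)]
  congr 1
  push_cast
  ring_nf

lemma qFall_eq_zero {q : ℝ} {x m : ℕ} (h : x < m) : qFall q (x : ℤ) m = 0 := by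
  unfold qFall
  apply Finset.prod_eq_zero (i := x + 1) (by simp [mem_Icc]; omega)
  have : (x : ℤ) - (↑(x + 1) : ℤ) + 1 = 0 := by push_cast; ring
  rw [this]
  simp [qInt]

lemma qFall_mul {q : ℝ} {x m : ℕ} (h : m ≤ x) :
    qFall q (x : ℤ) m * qFact q (x - m) = qFact q x := by
  induction m with
  | zero => simp [qFall]
  | succ m ih =>
    have hm : m ≤ x := by omega
    have e1 : x - m = (x - (m + 1)) + 1 := by omega
    rw [qFall_succ]
    have := ih hm
    rw [e1, qFact_succ] at this
    have e2 : ((x - (m + 1) : ℕ) : ℤ) + 1 = (x : ℤ) - m := by omega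
    rw [e2] at this
    linarith [this]

lemma qBinom_self {q : ℝ} (hq0 : 0 < q) (hq1 : q < 1) (n : ℕ) : qBinom q n n = 1 := by
  unfold qBinom
  rw [Nat.sub_self]
  have h0 : qFact q 0 = 1 := by simp [qFact]
  rw [h0, mul_one, div_self (qFact_pos hq0 hq1 n).ne']

lemma qBinom_zero {q : ℝ} (hq0 : 0 < q) (hq1 : q < 1) (n : ℕ) : qBinom q n 0 = 1 := by
  unfold qBinom
  have h0 : qFact q 0 = 1 := by simp [qFact]
  rw [Nat.sub_zero, h0, one_mul, div_self (qFact_pos hq0 hq1 n).ne']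

lemma qInt_split {q : ℝ} (hq1 : q < 1) {k n : ℕ} (hk : k ≤ n) :
    qInt q ((n : ℤ) + 1) = qInt q ((n : ℤ) - k) + q ^ (n - k) * qInt q ((k : ℤ) + 1) := by
  unfold qInt
  have e1 : (n : ℤ) - k = ((n - k : ℕ) : ℤ) := by omega
  have e2 : (n : ℤ) + 1 = ((n + 1 : ℕ) : ℤ) := by push_cast; ring
  have e3 : (k : ℤ) + 1 = ((k + 1 : ℕ) : ℤ) := by push_cast; ring
  rw [e1, e2, e3, zpow_natCast, zpow_natCast, zpow_natCast]
  have hq' : (1 - q) ≠ 0 := by intro h; linarith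
  have e4 : q ^ (n + 1) = q ^ (n - k) * q ^ (k + 1) := by
    rw [← pow_add]; congr 1; omega
  field_simp
  rw [e4]; ring

lemma qBinom_pascal {q : ℝ} (hq0 : 0 < q) (hq1 : q < 1) {n k : ℕ} (hk : k < n) :
    qBinom q (n + 1) (k + 1) = qBinom q n (k + 1) + q ^ (n - k) * qBinom q n k := by
  unfold qBinom
  have e1 : n + 1 - (k + 1) = n - k := by omega
  have e2 : n - (k + 1) = n - k - 1 := by omega
  rw [e1, e2, qFact_succ q n, qFact_succ q k]
  have e3 : n - k = (n - k - 1) + 1 := by omega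
  rw [e3, qFact_succ q (n - k - 1)]
  have e4 : ((n - k - 1 : ℕ) : ℤ) + 1 = (n : ℤ) - k := by omega
  rw [e4, qInt_split hq1 hk.le]
  have e5 : ((n : ℤ) - k) = ((n - k : ℕ) : ℤ) := by omega
  have ha : qInt q ((k : ℤ) + 1) ≠ 0 := by
    have : ((k : ℤ) + 1) = ((k + 1 : ℕ) : ℤ) := by push_cast; ring
    rw [this]; exact (qInt_pos hq0 hq1 (by omega)).ne'
  have hb : qInt q ((n : ℤ) - k) ≠ 0 := by
    rw [e5]; exact (qInt_pos hq0 hq1 (by omega)).ne'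
  have hFk : qFact q k ≠ 0 := (qFact_pos hq0 hq1 k).ne'
  have hG : qFact q (n - k - 1) ≠ 0 := (qFact_pos hq0 hq1 _).ne'
  have epow : q ^ (n - k) = q ^ (n - k - 1) * q := by
    obtain ⟨j, hj⟩ : ∃ j, n - k = j + 1 := ⟨n - k - 1, by omega⟩
    rw [hj, Nat.add_sub_cancel, pow_succ]
  simp only [Nat.add_sub_cancel]
  field_simp
  rw [epow]; ring

lemma key_sum {q : ℝ} (hq0 : 0 < q) (hq1 : q < 1) (t : ℝ) (n : ℕ) :
    ∑ x ∈ range (n + 1), qBinom q n x * t ^ x * ominus q t (n - x) = 1 := by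
  induction n with
  | zero => simp [qBinom_self hq0 hq1, ominus]
  | succ n ih =>
    set f : ℕ → ℝ := fun x => qBinom q n x * t ^ x * ominus q t (n - x) with hf
    set g : ℕ → ℝ := fun x => q ^ (n - x) * qBinom q n x * t ^ x * ominus q t (n - x) with hg
    have hsplit : ∀ y ∈ range n,
        qBinom q (n + 1) (y + 1) * t ^ (y + 1) * ominus q t (n + 1 - (y + 1))
          = f (y + 1) - t * g (y + 1) + t * g y := by
      intro y hy
      rw [mem_range] at hy
      have e0 : n + 1 - (y + 1) = n - y := by omega
      have e1 : n - y = (n - 1 - y) + 1 := by omega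
      have e2 : n - (y + 1) = n - 1 - y := by omega
      rw [e0, qBinom_pascal hq0 hq1 hy]
      simp only [hf, hg, e2]
      have e3 : n - y = (n - 1 - y) + 1 := by omega
      rw [e3, ominus_succ, pow_succ]
      ring
    calc ∑ x ∈ range (n + 1 + 1), qBinom q (n+1) x * t ^ x * ominus q t (n + 1 - x)
        = qBinom q (n+1) 0 * t ^ 0 * ominus q t (n + 1) +
          ∑ y ∈ range (n + 1), qBinom q (n+1) (y+1) * t ^ (y+1) * ominus q t (n + 1 - (y+1)) := by
          rw [Finset.sum_range_succ', Nat.sub_zero]; ring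
      _ = ominus q t (n + 1) +
          ((∑ y ∈ range n, qBinom q (n+1) (y+1) * t ^ (y+1) * ominus q t (n + 1 - (y+1)))
            + qBinom q (n+1) (n+1) * t ^ (n+1) * ominus q t (n + 1 - (n+1))) := by
          rw [Finset.sum_range_succ, qBinom_zero hq0 hq1]; ring_nf
      _ = ominus q t (n + 1) +
          ((∑ y ∈ range n, (f (y+1) - t * g (y+1) + t * g y)) + t ^ (n+1)) := by
          rw [Finset.sum_congr rfl hsplit, qBinom_self hq0 hq1, Nat.sub_self]
          simp [ominus]
      _ = ominus q t (n + 1) +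
          (((∑ y ∈ range n, f (y+1)) - t * (∑ y ∈ range n, g (y+1)) + t * (∑ y ∈ range n, g y))
            + t ^ (n+1)) := by
          rw [Finset.sum_add_distrib, Finset.sum_sub_distrib, Finset.mul_sum, Finset.mul_sum]
      _ = 1 := by
          have hA : ∑ y ∈ range n, f (y + 1) = (∑ x ∈ range (n+1), f x) - f 0 := by
            rw [Finset.sum_range_succ' f n]; ring
          have hB : ∑ y ∈ range n, g (y + 1) = (∑ x ∈ range (n+1), g x) - g 0 := by
            rw [Finset.sum_range_succ' g n]; ring
          have hC : ∑ y ∈ range n, g y = (∑ x ∈ range (n+1), g x) - g n := by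
            rw [Finset.sum_range_succ g n]; ring
          have hf0 : f 0 = ominus q t n := by
            simp [hf, qBinom_zero hq0 hq1]
          have hg0 : g 0 = q ^ n * ominus q t n := by
            simp [hg, qBinom_zero hq0 hq1]
          have hgn : g n = t ^ n := by
            simp [hg, qBinom_self hq0 hq1, ominus]
          rw [hA, hB, hC, hf0, hg0, hgn, ih, ominus_succ]
          ring

theorem stmt11 (q : ℝ) (hq0 : 0 < q) (hq1 : q < 1) (N : ℕ) (β : ℝ)
    (hβ : 0 < β) (hβ' : β < 1) (m : ℕ) (hm : m ≤ N) :
    ∑ x ∈ Finset.range (N + 1),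
      qFall q (x : ℤ) m * qBinom q N x * β ^ x * ominus q β (N - x)
      = qFall q (N : ℤ) m * β ^ m := by

  set n := N - m with hn
  have hN : N + 1 = m + (n + 1) := by omega
  rw [hN, Finset.sum_range_add]
  have hzero : ∑ x ∈ range m,
      qFall q (x : ℤ) m * qBinom q N x * β ^ x * ominus q β (N - x) = 0 := by
    apply Finset.sum_eq_zero
    intro x hx
    rw [qFall_eq_zero (mem_range.mp hx)]
    ring
  rw [hzero, zero_add]
  have hterm : ∀ y ∈ range (n + 1),
      qFall q ((m + y : ℕ) : ℤ) m * qBinom q N (m + y) * β ^ (m + y) *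
          ominus q β (N - (m + y))
        = (qFall q (N : ℤ) m * β ^ m) * (qBinom q n y * β ^ y * ominus q β (n - y)) := by
    intro y hy
    rw [mem_range] at hy
    have hyn : y ≤ n := by omega
    have h1 : qFall q ((m + y : ℕ) : ℤ) m * qFact q y = qFact q (m + y) := by
      have := qFall_mul (q := q) (x := m + y) (m := m) (by omega)
      rwa [show m + y - m = y by omega] at this
    have h2 : qFall q (N : ℤ) m * qFact q n = qFact q N := by
      have := qFall_mul (q := q) (x := N) (m := m) hm
      rwa [← hn] at this
    have h1' : qFall q ((m + y : ℕ) : ℤ) m = qFact q (m + y) / qFact q y :=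
      (eq_div_iff (qFact_pos hq0 hq1 y).ne').mpr h1
    have h2' : qFall q (N : ℤ) m = qFact q N / qFact q n :=
      (eq_div_iff (qFact_pos hq0 hq1 n).ne').mpr h2
    unfold qBinom
    rw [show N - (m + y) = n - y by omega, show n - y = n - y from rfl, h1', h2',
      pow_add β m y]
    have e1 : qFact q (m + y) ≠ 0 := (qFact_pos hq0 hq1 _).ne'
    have e2 : qFact q y ≠ 0 := (qFact_pos hq0 hq1 _).ne'
    have e3 : qFact q n ≠ 0 := (qFact_pos hq0 hq1 _).ne'
    have e4 : qFact q (n - y) ≠ 0 := (qFact_pos hq0 hq1 _).ne'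
    field_simp
  rw [Finset.sum_congr rfl hterm, ← Finset.mul_sum, key_sum hq0 hq1 β n, mul_one]
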